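/- For every positive integer i, the polynomial identity ∑_{k=1}^{i+1} (b(i,1,k)/k!)·t^k = (1/(i+1)!)·t(t+1)(t+2)⋯(t+i) holds in ℚ[t], where b(i,1,k) = ∑_{(l₁,…,l_k)∈P(k,i+1)} 1/(l₁⋯l_k). -/

import Mathlib

open Finset Polynomial

/-- The set of `k`-tuples of positive integers summing to `n`. -/
def P (k n : ℕ) : Finset (Fin k → ℕ) :=
  (Finset.Nat.antidiagonalTuple k n).filter fun l => ∀ i, 0 < l i

/-- `∑_{(l₁,…,l_k)∈P(k,n)} 1/(l₁⋯l_k)`. -/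
def S (k n : ℕ) : ℚ := ∑ l ∈ P k n, (∏ i, (l i : ℚ))⁻¹

/-- `e_l(1,2,…,m)` : the l-th elementary symmetric polynomial evaluated at 1,…,m. -/
def esym (m l : ℕ) : ℚ := (((Finset.range m).val.map fun i => ((i : ℚ) + 1)).esymm l)

lemma mem_P {k n : ℕ} {l : Fin k → ℕ} : l ∈ P k n ↔ (∑ i, l i = n) ∧ ∀ i, 0 < l i := by
  simp [P, Finset.Nat.mem_antidiagonalTuple]

lemma S_zero {n : ℕ} (hn : 0 < n) : S 0 n = 0 := by
  have : P 0 n = ∅ := by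
    ext l
    simp [mem_P]
    omega
  simp [S, this]

lemma S_eq_zero {k n : ℕ} (h : n < k) : S k n = 0 := by
  have : P k n = ∅ := by
    ext l
    simp only [mem_P, Finset.notMem_empty, iff_false, not_and]
    intro hs hp
    have : k ≤ ∑ i, l i := by
      calc k = ∑ _i : Fin k, 1 := by simp
      _ ≤ ∑ i, l i := Finset.sum_le_sum fun i _ => hp i
    omega
  simp [S, this]

lemma sum_P_comp_perm {k n : ℕ} (σ : Equiv.Perm (Fin k)) (f : (Fin k → ℕ) → ℚ) :
    ∑ l ∈ P k n, f (l ∘ σ) = ∑ l ∈ P k n, f l := by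
  apply Finset.sum_nbij' (i := fun l => l ∘ σ) (j := fun l => l ∘ σ.symm)
  · intro l hl
    rw [mem_P] at hl ⊢
    exact ⟨by rw [← hl.1]; exact Equiv.sum_comp σ l, fun i => hl.2 _⟩
  · intro l hl
    rw [mem_P] at hl ⊢
    exact ⟨by rw [← hl.1]; exact Equiv.sum_comp σ.symm l, fun i => hl.2 _⟩
  · intro l _; ext i; simp
  · intro l _; ext i; simp
  · intro l _; rfl

lemma W_eq {k n : ℕ} :
    ∑ l ∈ P (k + 1) n, (∏ i : Fin k, (l i.succ : ℚ))⁻¹ = ∑ a ∈ Finset.range n, S k a := by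
  simp only [S]
  rw [← Finset.sum_sigma (Finset.range n) (fun m => P k m)
      (fun p => (∏ i, (p.2 i : ℚ))⁻¹)]
  apply Finset.sum_nbij' (i := fun (l : Fin (k+1) → ℕ) => (⟨∑ i : Fin k, l i.succ, Fin.tail l⟩ : Σ _ : ℕ, (Fin k → ℕ)))
    (j := fun (p : Σ _ : ℕ, (Fin k → ℕ)) => Fin.cons (n - p.1) p.2)
  · intro l hl
    rw [mem_P] at hl
    obtain ⟨hs, hp⟩ := hl
    rw [Fin.sum_univ_succ] at hs
    have h0 := hp 0
    simp only [Finset.mem_sigma, Finset.mem_range, mem_P]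
    refine ⟨by omega, rfl, fun i => hp _⟩
  · intro p hp
    simp only [Finset.mem_sigma, Finset.mem_range, mem_P] at hp
    obtain ⟨hm, hs, hpos⟩ := hp
    rw [mem_P, Fin.sum_univ_succ]
    refine ⟨?_, ?_⟩
    · simp only [Fin.cons_zero, Fin.cons_succ]
      omega
    · intro i
      induction i using Fin.cases with
      | zero => simp; omega
      | succ j => simp [hpos j]
  · intro l hl
    rw [mem_P] at hl
    obtain ⟨hs, hp⟩ := hl
    rw [Fin.sum_univ_succ] at hs
    have : n - ∑ i : Fin k, l i.succ = l 0 := by omega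
    simp [this, Fin.cons_self_tail]
  · intro p hp
    simp only [Finset.mem_sigma, Finset.mem_range, mem_P] at hp
    obtain ⟨hm, hs, hpos⟩ := hp
    simp only [Fin.cons_succ, Fin.tail_cons]
    exact Sigma.ext (by simpa using hs) (by simp)
  · intro l _
    simp [Fin.tail]

lemma keyA (k n : ℕ) : (n : ℚ) * S (k + 1) n = (k + 1) * ∑ a ∈ Finset.range n, S k a := by
  have step1 : (n : ℚ) * S (k + 1) n
      = ∑ j : Fin (k + 1), ∑ l ∈ P (k + 1) n, (l j : ℚ) * ∏ i, (l i : ℚ)⁻¹ := by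
    rw [S, Finset.mul_sum, Finset.sum_comm]
    apply Finset.sum_congr rfl
    intro l hl
    rw [mem_P] at hl
    have : (n : ℚ) = ∑ j, (l j : ℚ) := by
      rw [← hl.1]; push_cast; ring
    rw [this, Finset.sum_mul]
    apply Finset.sum_congr rfl
    intro j _
    rw [Finset.prod_inv_distrib]
  have step2 : ∀ j : Fin (k + 1),
      ∑ l ∈ P (k + 1) n, (l j : ℚ) * ∏ i, (l i : ℚ)⁻¹
        = ∑ l ∈ P (k + 1) n, (l 0 : ℚ) * ∏ i, (l i : ℚ)⁻¹ := by
    intro j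
    rw [← sum_P_comp_perm (Equiv.swap 0 j) (fun l => (l 0 : ℚ) * ∏ i, (l i : ℚ)⁻¹)]
    apply Finset.sum_congr rfl
    intro l _
    simp only [Function.comp_apply, Equiv.swap_apply_left]
    congr 1
    exact (Equiv.prod_comp (Equiv.swap 0 j) (fun i => (l i : ℚ)⁻¹)).symm
  have step3 : ∑ l ∈ P (k + 1) n, (l 0 : ℚ) * ∏ i, (l i : ℚ)⁻¹
      = ∑ a ∈ Finset.range n, S k a := by
    rw [← W_eq]
    apply Finset.sum_congr rfl
    intro l hl
    rw [mem_P] at hl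
    have h0 : (l 0 : ℚ) ≠ 0 := Nat.cast_ne_zero.2 (hl.2 0).ne'
    rw [Fin.prod_univ_succ, ← mul_assoc, mul_inv_cancel₀ h0, one_mul,
      ← Finset.prod_inv_distrib]
  rw [step1]
  simp_rw [step2, step3]
  rw [Finset.sum_const]
  simp only [Finset.card_univ, Fintype.card_fin, nsmul_eq_mul]
  push_cast
  ring

lemma stirling_rec (k n : ℕ) (hk : 0 < k) (hn : 0 < n) :
    ((n : ℚ) + 1) * S k (n + 1) = (n : ℚ) * S k n + k * S (k - 1) n := by
  obtain ⟨k', rfl⟩ := Nat.exists_eq_succ_of_ne_zero hk.ne'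
  have h1 := keyA k' (n + 1)
  have h2 := keyA k' n
  rw [Finset.sum_range_succ] at h1
  push_cast at h1 ⊢
  rw [h1, h2]
  ring

theorem stmt3 (i : ℕ) (hi : 0 < i) :
    ∑ k ∈ Finset.Icc 1 (i + 1), Polynomial.C (S k (i + 1) / k.factorial) * X ^ k
      = Polynomial.C (1 / ((i + 1).factorial : ℚ)) *
        ∏ j ∈ Finset.range (i + 1), (X + Polynomial.C (j : ℚ)) := by
  clear hi
  induction i with
  | zero =>
    have hS : S 1 1 = 1 := by
      have : P 1 1 = {fun _ => 1} := by
        ext l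
        simp only [mem_P, Finset.mem_singleton, Fin.sum_univ_one]
        constructor
        · rintro ⟨h1, h2⟩; funext j
          obtain rfl : j = 0 := Subsingleton.elim _ _
          omega
        · rintro rfl; simp
      simp [S, this]
    rw [show Finset.Icc 1 1 = {1} from rfl]
    simp [hS]
  | succ n ih =>
    have key : ∀ k : ℕ, Polynomial.C ((n:ℚ)+2) *
          (Polynomial.C (S (k+1) (n+2) / (k+1).factorial) * X^(k+1))
        = X * (Polynomial.C (S k (n+1) / k.factorial) * X^k)
          + Polynomial.C ((n:ℚ)+1) * (Polynomial.C (S (k+1) (n+1) / (k+1).factorial) * X^(k+1)) := by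
      intro k
      have hrec := stirling_rec (k+1) (n+1) (Nat.succ_pos _) (Nat.succ_pos _)
      simp only [Nat.add_sub_cancel] at hrec
      push_cast at hrec
      have h1 : ((k+1).factorial : ℚ) = ((k:ℚ)+1) * k.factorial := by
        rw [Nat.factorial_succ]; push_cast; ring
      have hk1 : ((k:ℚ)+1) ≠ 0 := by positivity
      have h2 : S k (n+1) / (k.factorial : ℚ)
          = (((k:ℚ)+1) * S k (n+1)) / ((k+1).factorial : ℚ) := by
        rw [h1, mul_div_mul_left _ _ hk1]
      rw [show n+1+1 = n+2 from by omega] at hrec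
      have hco : ((n:ℚ)+2) * (S (k+1) (n+2) / (k+1).factorial)
          = S k (n+1) / k.factorial + ((n:ℚ)+1) * (S (k+1) (n+1) / (k+1).factorial) := by
        rw [h2]
        linear_combination hrec * (((k+1).factorial : ℚ))⁻¹
      rw [← mul_assoc, ← Polynomial.C_mul, hco, Polynomial.C_add, Polynomial.C_mul, add_mul]
      ring
    have hL : ∀ m : ℕ, 0 < m → (∑ k ∈ Finset.Icc 1 m, Polynomial.C (S k m / k.factorial) * X ^ k)
        = ∑ k ∈ Finset.range (m+1), Polynomial.C (S k m / k.factorial) * X ^ k := by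
      intro m hm
      have h : Finset.range (m+1) = insert 0 (Finset.Icc 1 m) := by
        ext x; simp; omega
      rw [h, Finset.sum_insert (by simp)]
      simp [S_zero hm]
    have ihr : (∑ k ∈ Finset.range (n+2), Polynomial.C (S k (n+1) / k.factorial) * X ^ k)
        = Polynomial.C (1 / ((n+1).factorial : ℚ)) *
          ∏ j ∈ Finset.range (n+1), (X + Polynomial.C (j:ℚ)) := by
      rw [← hL _ n.succ_pos]; exact ih
    set A : ℚ[X] := ∑ k ∈ Finset.range (n+2), Polynomial.C (S k (n+1) / k.factorial) * X ^ k
      with hA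
    have shift : (∑ k ∈ Finset.range (n+2),
          Polynomial.C (S (k+1) (n+1) / (k+1).factorial) * X ^ (k+1)) = A := by
      have h' := Finset.sum_range_succ'
        (fun k => Polynomial.C (S k (n+1) / k.factorial) * X ^ k) (n+2)
      rw [Finset.sum_range_succ] at h'
      simp only [S_zero n.succ_pos, S_eq_zero (Nat.lt_succ_self (n+1)), zero_div,
        Polynomial.C_0, zero_mul, add_zero, pow_zero, mul_one] at h'
      rw [hA, h']
    have expand : Polynomial.C ((n:ℚ)+2) *
          (∑ k ∈ Finset.range (n+2+1), Polynomial.C (S k (n+2) / k.factorial) * X ^ k)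
        = (X + Polynomial.C ((n:ℚ)+1)) * A := by
      rw [Finset.sum_range_succ'
        (fun k => Polynomial.C (S k (n+2) / k.factorial) * X ^ k) (n+2)]
      rw [S_zero (show 0 < n+2 by omega)]
      simp only [zero_div, Polynomial.C_0, zero_mul, add_zero, pow_zero, mul_one]
      rw [Finset.mul_sum]
      rw [Finset.sum_congr rfl (fun k _ => key k), Finset.sum_add_distrib]
      rw [← Finset.mul_sum, ← Finset.mul_sum, shift, ← hA]
      ring
    rw [hL _ (by omega), Finset.prod_range_succ]
    push_cast
    rw [show n+1+1 = n+2 from by omega]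
    have hC2 : (Polynomial.C ((n:ℚ)+2)) ≠ 0 := by
      simp only [ne_eq, Polynomial.C_eq_zero]
      positivity
    apply mul_left_cancel₀ hC2
    rw [expand, ihr]
    have hc : ((n:ℚ)+2) * (1 / ((n+2).factorial : ℚ)) = 1 / ((n+1).factorial : ℚ) := by
      rw [Nat.factorial_succ]
      have : ((n+1).factorial : ℚ) ≠ 0 := Nat.cast_ne_zero.2 (n+1).factorial_ne_zero
      push_cast
      field_simp
      ring
    rw [show Polynomial.C ((n:ℚ)+2) * (Polynomial.C (1 / ((n+2).factorial : ℚ)) *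
          ((∏ j ∈ Finset.range (n+1), (X + Polynomial.C (j:ℚ))) * (X + Polynomial.C ((n:ℚ)+1))))
        = Polynomial.C (((n:ℚ)+2) * (1 / ((n+2).factorial : ℚ))) *
          ((∏ j ∈ Finset.range (n+1), (X + Polynomial.C (j:ℚ))) * (X + Polynomial.C ((n:ℚ)+1)))
        from by rw [Polynomial.C_mul, mul_assoc], hc]
    ring
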